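/- Let n ≥ 1, let Ω ⊂ ℝⁿ be a nonempty bounded open set and let β > 0. Let w be a Lipschitz function on the closure of Ω with sup_Ω w⁺ = sup_Ω w⁻ = M > 0, where w⁺ = max(w,0) and w⁻ = max(−w,0). Then max{Lip(w), β·sup_{∂Ω}|w|} ≥ M / s_β(Ω); that is, every function whose positive and negative parts have the same supremum on Ω has normalized Rayleigh quotient at least λ_{2,∞}(Ω) = 1/s_β(Ω). -/

import Mathlib

open Set Metric

/-- The normalized cone of height 1 and base radius `t` centered at `x`. -/
noncomputable def cone {n : ℕ} (x : EuclideanSpace ℝ (Fin n)) (t : ℝ)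
    (y : EuclideanSpace ℝ (Fin n)) : ℝ :=
  max (t - ‖y - x‖) 0 / t

/-- `t > 0` is admissible for `Ω` and `β`. -/
def admissible {n : ℕ} (Ω : Set (EuclideanSpace ℝ (Fin n))) (β t : ℝ) : Prop :=
  0 < t ∧ ∃ x₁ ∈ closure Ω, ∃ x₂ ∈ closure Ω, 2 * t ≤ ‖x₁ - x₂‖ ∧
    (∀ y ∈ frontier Ω, cone x₁ t y ≤ 1 / (β * t)) ∧
    (∀ y ∈ frontier Ω, cone x₂ t y ≤ 1 / (β * t))

/-- `s_β(Ω)`, the supremum of admissible radii. -/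
noncomputable def sGeom {n : ℕ} (Ω : Set (EuclideanSpace ℝ (Fin n))) (β : ℝ) : ℝ :=
  sSup {t | admissible Ω β t}

/-- The smallest Lipschitz constant of `w` on the set `s`. -/
noncomputable def lipConst {n : ℕ} (s : Set (EuclideanSpace ℝ (Fin n)))
    (w : EuclideanSpace ℝ (Fin n) → ℝ) : ℝ :=
  sInf {L | 0 ≤ L ∧ ∀ x ∈ s, ∀ y ∈ s, |w x - w y| ≤ L * ‖x - y‖}


theorem rayleigh_lower_bound_for_balanced_functions
    {n : ℕ} (hn : 1 ≤ n) (Ω : Set (EuclideanSpace ℝ (Fin n)))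
    (hne : Ω.Nonempty) (ho : IsOpen Ω) (hb : Bornology.IsBounded Ω)
    (β : ℝ) (hβ : 0 < β)
    (w : EuclideanSpace ℝ (Fin n) → ℝ)
    (hw : ∃ L : NNReal, LipschitzOnWith L w (closure Ω))
    (M : ℝ) (hM : 0 < M)
    (hplus : sSup ((fun x => max (w x) 0) '' Ω) = M)
    (hminus : sSup ((fun x => max (-w x) 0) '' Ω) = M) :
    M / sGeom Ω β ≤
      max (lipConst (closure Ω) w) (β * sSup ((fun y => |w y|) '' frontier Ω)) := by
  classical
  obtain ⟨L₀, hL₀⟩ := hw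
  set K := closure Ω with hKdef
  have hKcomp : IsCompact K := hb.isCompact_closure
  have hKne : K.Nonempty := hne.closure
  have hwc : ContinuousOn w K := hL₀.continuousOn
  set S : Set ℝ := {L | 0 ≤ L ∧ ∀ x ∈ K, ∀ y ∈ K, |w x - w y| ≤ L * ‖x - y‖} with hSdef
  have hSne : S.Nonempty := by
    refine ⟨L₀, L₀.2, fun x hx y hy => ?_⟩
    have h := hL₀.dist_le_mul x hx y hy
    rwa [Real.dist_eq, dist_eq_norm] at h
  set L := lipConst K w with hLdef
  have hLS : L ∈ S := by
    constructor
    · exact le_csInf hSne fun b hb => hb.1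
    · intro x hx y hy
      rcases eq_or_ne x y with rfl | hxy
      · simp
      · have hd : 0 < ‖x - y‖ := by
          rw [norm_sub_pos_iff]; exact hxy
        have hlb : |w x - w y| / ‖x - y‖ ≤ L := by
          apply le_csInf hSne
          intro b hb
          rw [div_le_iff₀ hd]
          exact hb.2 x hx y hy
        calc |w x - w y| = |w x - w y| / ‖x - y‖ * ‖x - y‖ := by
              field_simp
          _ ≤ L * ‖x - y‖ := by
              exact mul_le_mul_of_nonneg_right hlb hd.le
  have hL0 : 0 ≤ L := hLS.1
  have hLlip := hLS.2
  -- find a point where w attains M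
  have attain : ∀ v : EuclideanSpace ℝ (Fin n) → ℝ, ContinuousOn v K →
      sSup ((fun x => max (v x) 0) '' Ω) = M → ∃ x ∈ K, v x = M := by
    intro v hv hsup
    set f : EuclideanSpace ℝ (Fin n) → ℝ := fun x => max (v x) 0 with hfdef
    have hf : ContinuousOn f K := (continuous_id.max continuous_const).comp_continuousOn hv
    obtain ⟨x₁, hx₁K, hmax⟩ := hKcomp.exists_isMaxOn hKne hf
    have hbdd : BddAbove (f '' Ω) :=
      (hKcomp.bddAbove_image hf).mono (image_mono subset_closure)
    have hle : f x₁ ≤ M := by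
      have hmem : f x₁ ∈ closure (f '' Ω) := hf.image_closure ⟨x₁, hx₁K, rfl⟩
      have hsub : closure (f '' Ω) ⊆ Iic M :=
        closure_minimal (fun a ha => hsup ▸ le_csSup hbdd ha) isClosed_Iic
      exact hsub hmem
    have hge : M ≤ f x₁ := by
      rw [← hsup]
      apply csSup_le ((hne.image f))
      rintro a ⟨x, hx, rfl⟩
      exact hmax (subset_closure hx)
    have heq : max (v x₁) 0 = M := le_antisymm hle hge
    refine ⟨x₁, hx₁K, ?_⟩
    rcases max_cases (v x₁) 0 with ⟨h1, h2⟩ | ⟨h1, h2⟩ <;> linarith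
  obtain ⟨x₁, hx₁K, hwx₁⟩ := attain w hwc hplus
  obtain ⟨x₂, hx₂K, hwx₂'⟩ := attain (fun x => -w x) hwc.neg hminus
  have hwx₂ : w x₂ = -M := by linarith [hwx₂']
  -- boundary sup
  set Bs : ℝ := sSup ((fun y => |w y|) '' frontier Ω) with hBsdef
  have hfg : frontier Ω ⊆ K := frontier_subset_closure
  have hbdB : BddAbove ((fun y => |w y|) '' frontier Ω) :=
    (hKcomp.bddAbove_image hwc.abs).mono (image_mono hfg)
  have hyB : ∀ y ∈ frontier Ω, |w y| ≤ Bs := fun y hy => le_csSup hbdB ⟨y, hy, rfl⟩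
  set R : ℝ := max L (β * Bs) with hRdef
  -- separation of the extreme points
  have hsep : 2 * M ≤ L * ‖x₁ - x₂‖ := by
    have h := hLlip x₁ hx₁K x₂ hx₂K
    rw [hwx₁, hwx₂] at h
    have : |M - -M| = 2 * M := by rw [abs_of_pos (by linarith)]; ring
    linarith [this ▸ h]
  have hLpos : 0 < L := by
    by_contra hc
    push_neg at hc
    have : L * ‖x₁ - x₂‖ ≤ 0 := mul_nonpos_of_nonpos_of_nonneg hc (norm_nonneg _)
    linarith
  have hRpos : 0 < R := lt_of_lt_of_le hLpos (le_max_left _ _)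
  set t : ℝ := M / R with htdef
  have ht : 0 < t := div_pos hM hRpos
  -- cone bound
  have coneb : ∀ x ∈ K, |w x| = M → ∀ y ∈ frontier Ω, cone x t y ≤ 1 / (β * t) := by
    intro x hxK hwx y hy
    have hkey : max (t - ‖y - x‖) 0 ≤ 1 / β := by
      apply max_le _ (by positivity)
      have h1 : M - |w y| ≤ R * ‖y - x‖ := by
        have h := hLlip x hxK y (hfg hy)
        have h2 : |w x| - |w y| ≤ |w x - w y| := abs_sub_abs_le_abs_sub _ _
        have h3 : ‖x - y‖ = ‖y - x‖ := norm_sub_rev _ _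
        have h4 : L * ‖y - x‖ ≤ R * ‖y - x‖ :=
          mul_le_mul_of_nonneg_right (le_max_left _ _) (norm_nonneg _)
        rw [hwx] at h2
        rw [h3] at h
        linarith
      have h5 : β * Bs ≤ R := le_max_right _ _
      have h6 : Bs ≤ R * (1 / β) := by
        rw [mul_one_div, le_div_iff₀ hβ, mul_comm]
        exact h5
      have h7 : M ≤ R * ‖y - x‖ + R * (1 / β) := by
        have := hyB y hy
        linarith
      rw [htdef, sub_le_iff_le_add, div_le_iff₀ hRpos]
      nlinarith
    rw [cone, div_le_div_iff₀ ht (by positivity)]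
    calc max (t - ‖y - x‖) 0 * (β * t) ≤ (1 / β) * (β * t) := by
          apply mul_le_mul_of_nonneg_right hkey (by positivity)
      _ = 1 * t := by field_simp
  -- t is admissible
  have hadm : admissible Ω β t := by
    refine ⟨ht, x₁, hx₁K, x₂, hx₂K, ?_, ?_, ?_⟩
    · have h4 : L * ‖x₁ - x₂‖ ≤ R * ‖x₁ - x₂‖ :=
        mul_le_mul_of_nonneg_right (le_max_left _ _) (norm_nonneg _)
      rw [htdef]
      rw [mul_div_assoc', div_le_iff₀ hRpos]
      nlinarith
    · exact coneb x₁ hx₁K (by rw [hwx₁]; exact abs_of_pos hM)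
    · exact coneb x₂ hx₂K (by rw [hwx₂, abs_neg]; exact abs_of_pos hM)
  -- admissible radii are bounded
  have hAbdd : BddAbove {t | admissible Ω β t} := by
    refine ⟨diam K / 2, fun u hu => ?_⟩
    obtain ⟨hupos, y₁, hy₁, y₂, hy₂, husep, -, -⟩ := hu
    have : ‖y₁ - y₂‖ ≤ diam K := by
      rw [← dist_eq_norm]
      exact dist_le_diam_of_mem hb.closure hy₁ hy₂
    linarith
  have hts : t ≤ sGeom Ω β := le_csSup hAbdd hadm
  have hsPos : 0 < sGeom Ω β := lt_of_lt_of_le ht hts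
  have hfin : M / sGeom Ω β ≤ M / t := by
    apply div_le_div_of_nonneg_left hM.le ht hts
  have htR : M / t = R := by
    rw [htdef]
    field_simp
  rw [hKdef] at hLdef
  calc M / sGeom Ω β ≤ M / t := hfin
    _ = R := htR
    _ = max (lipConst (closure Ω) w) (β * sSup ((fun y => |w y|) '' frontier Ω)) := by
        rw [hRdef, hLdef, hBsdef]
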